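/- Let A₀ be the ℍ-valued 1-form on the open set {(x, y) ∈ ℍ² : x ≠ 0, y ≠ 0} ⊆ ℝ⁸ defined by A₀(x, y)(u, w) = Im(|y|²·x⁻¹·u + |x|²·y⁻¹·w)/(|x|² + |y|²). Then A₀ is smooth and its curvature F = dA₀ + A₀∧A₀ is given by F(x, y)((u₁, w₁), (u₂, w₂)) = (|x|² + |y|²)⁻² · Im[ |y|²·x⁻¹·(u₁·ū₂ − u₂·ū₁)·x + |x|²·y⁻¹·(w₁·w̄₂ − w₂·w̄₁)·y − 2·(x̄·u₁·w̄₂·y − x̄·u₂·w̄₁·y) ] for all u₁, w₁, u₂, w₂ ∈ ℍ. -/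

import Mathlib

set_option maxRecDepth 8000
set_option maxHeartbeats 2000000

/- STATEMENT 12: The standard G₂-instanton connection form
A₀(x,y)(u,w) = Im(|y|²·x⁻¹·u + |x|²·y⁻¹·w)/(|x|²+|y|²) on {(x,y) : x ≠ 0, y ≠ 0} ⊆ ℍ²
is smooth there, with curvature F = dA₀ + A₀∧A₀ given by the stated formula. -/

open Quaternion

noncomputable section

/-- The standard G₂-instanton connection form on ℍ² ≅ ℝ⁸. -/
def A0 : ℍ[ℝ] × ℍ[ℝ] → ℍ[ℝ] × ℍ[ℝ] → ℍ[ℝ] := fun p t =>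
  ((‖p.1‖ ^ 2 + ‖p.2‖ ^ 2)⁻¹ : ℝ) •
    ((‖p.2‖ ^ 2 : ℝ) • (p.1⁻¹ * t.1) + (‖p.1‖ ^ 2 : ℝ) • (p.2⁻¹ * t.2)).im

section Aux

open ContinuousLinearMap

/-- The imaginary part of a quaternion, as a continuous linear map. -/
def imCLM : ℍ[ℝ] →L[ℝ] ℍ[ℝ] :=
  { toLinearMap := { toFun := fun q => q.im,
                     map_add' := by intros; simp,
                     map_smul' := by intros; simp },
    cont := Quaternion.continuous_im }

@[simp] lemma imCLM_apply (q : ℍ[ℝ]) : imCLM q = q.im := rfl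

lemma J4 (c : ℝ) (a b : ℍ[ℝ]) :
    (c • a.im) * (c • b.im) - (c • b.im) * (c • a.im) = (c^2) • (a*b - b*a).im := by
  ext <;> simp [Quaternion.re_mul, Quaternion.imI_mul, Quaternion.imJ_mul, Quaternion.imK_mul] <;>
    ring

lemma R1 (x u1 u2 : ℍ[ℝ]) :
    star x*(u1*(star x*u2)) = (2*(x*star u1).re) • (star x*u2) - (normSq x : ℝ) • (star u1*u2) := by
  ext <;> simp [Quaternion.re_mul, Quaternion.imI_mul, Quaternion.imJ_mul, Quaternion.imK_mul,
    Quaternion.normSq_def'] <;> ring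

lemma R2 (x u1 u2 : ℍ[ℝ]) :
    star x*(u1*(star u2*x)) = (2*(x*star u2).re) • (star x*u1) - (2*(x*star u1).re) • (star x*u2)
      + (normSq x : ℝ) • (star u1*u2) := by
  ext <;> simp [Quaternion.re_mul, Quaternion.imI_mul, Quaternion.imJ_mul, Quaternion.imK_mul,
    Quaternion.normSq_def'] <;> ring

lemma R3 (x y u1 w2 : ℍ[ℝ]) :
    star x*(u1*(star w2*y)) = (2*(y*star w2).re) • (star x*u1) - star x*(u1*(star y*w2)) := by
  ext <;> simp [Quaternion.re_mul, Quaternion.imI_mul, Quaternion.imJ_mul, Quaternion.imK_mul] <;>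
    ring

lemma R5 (x y u1 w2 : ℍ[ℝ]) :
    (star x*(u1*(star y*w2))).im = (2*(y*star w2).re) • (star x*u1).im
      + (2*(x*star u1).re) • (star y*w2).im - (star y*(w2*(star x*u1))).im := by
  ext <;> simp [Quaternion.re_mul, Quaternion.imI_mul, Quaternion.imJ_mul, Quaternion.imK_mul] <;>
    ring

lemma fderiv_A0 (x y : ℍ[ℝ]) (hx : x ≠ 0) (hy : y ≠ 0) (u w u1 w1 : ℍ[ℝ]) :
    fderiv ℝ (fun p : ℍ[ℝ] × ℍ[ℝ] => A0 p (u, w)) (x, y) (u1, w1) =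
      ((‖x‖ ^ 2 + ‖y‖ ^ 2)⁻¹ •
          ((‖y‖ ^ 2 : ℝ) • (-(x⁻¹ * u1 * x⁻¹) * u) + (2 * (y * star w1).re) • (x⁻¹ * u) +
            ((‖x‖ ^ 2 : ℝ) • (-(y⁻¹ * w1 * y⁻¹) * w) + (2 * (x * star u1).re) • (y⁻¹ * w))) +
        (-(((‖x‖ ^ 2 + ‖y‖ ^ 2) ^ 2)⁻¹ * (2 * (x * star u1).re + 2 * (y * star w1).re)) •
          ((‖y‖ ^ 2 : ℝ) • (x⁻¹ * u) + (‖x‖ ^ 2 : ℝ) • (y⁻¹ * w)))).im := by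
  have hx' : ‖x‖ ≠ 0 := norm_ne_zero_iff.2 hx
  have hn0 : (‖x‖^2 + ‖y‖^2) ≠ 0 := by positivity
  have hfst : HasFDerivAt (fun p : ℍ[ℝ] × ℍ[ℝ] => p.1) (fst ℝ _ _) (x, y) := hasFDerivAt_fst
  have hsnd : HasFDerivAt (fun p : ℍ[ℝ] × ℍ[ℝ] => p.2) (snd ℝ _ _) (x, y) := hasFDerivAt_snd
  have hb := hfst.norm_sq
  have ha := hsnd.norm_sq
  have hn := hb.add ha
  have hni := ((hasFDerivAt_inv' (𝕜 := ℝ) hn0).comp (x, y) hn :)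
  have hi1 := ((hasFDerivAt_inv' (𝕜 := ℝ) hx).comp (x, y) hfst :)
  have hi2 := ((hasFDerivAt_inv' (𝕜 := ℝ) hy).comp (x, y) hsnd :)
  have hm1 := hi1.mul_const' u
  have hm2 := hi2.mul_const' w
  have hs1 := ha.smul hm1
  have hs2 := hb.smul hm2
  have hsum := hs1.add hs2
  have hS := hni.smul hsum
  have hA := (imCLM.hasFDerivAt).comp (x, y) hS
  have H : HasFDerivAt (fun p : ℍ[ℝ] × ℍ[ℝ] => A0 p (u, w)) _ (x, y) :=
    hA.congr_of_eventuallyEq (by filter_upwards with p; simp [A0])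
  rw [H.fderiv]
  simp only [ContinuousLinearMap.comp_apply, ContinuousLinearMap.add_apply,
    ContinuousLinearMap.smul_apply, ContinuousLinearMap.smulRight_apply,
    ContinuousLinearMap.neg_apply, ContinuousLinearMap.coe_fst', ContinuousLinearMap.coe_snd',
    ContinuousLinearMap.mulLeftRight_apply, innerSL_apply_apply, Function.comp_apply, imCLM_apply,
    ContinuousLinearMap.coe_smul', Pi.smul_apply, Quaternion.inner_def, smul_eq_mul,
    nsmul_eq_mul, Nat.cast_ofNat]
  have hsc : ∀ n S : ℝ, -(n⁻¹ * S * n⁻¹) = -((n ^ 2)⁻¹ * S) := fun n S => by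
    rw [sq, mul_inv]; ring
  rw [hsc]
  simp only [Pi.add_apply, Pi.smul_apply', op_smul_eq_mul]

end Aux

theorem A0_smooth_and_curvature :
    ContDiffOn ℝ (⊤ : ℕ∞) (fun q : (ℍ[ℝ] × ℍ[ℝ]) × (ℍ[ℝ] × ℍ[ℝ]) => A0 q.1 q.2)
      ({p : ℍ[ℝ] × ℍ[ℝ] | p.1 ≠ 0 ∧ p.2 ≠ 0} ×ˢ (Set.univ : Set (ℍ[ℝ] × ℍ[ℝ]))) ∧
    ∀ x y : ℍ[ℝ], x ≠ 0 → y ≠ 0 → ∀ u1 w1 u2 w2 : ℍ[ℝ],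
      (fderiv ℝ (fun p => A0 p (u2, w2)) (x, y) (u1, w1) -
            fderiv ℝ (fun p => A0 p (u1, w1)) (x, y) (u2, w2)) +
          (A0 (x, y) (u1, w1) * A0 (x, y) (u2, w2) -
            A0 (x, y) (u2, w2) * A0 (x, y) (u1, w1)) =
        (((‖x‖ ^ 2 + ‖y‖ ^ 2) ^ 2)⁻¹ : ℝ) •
          ((‖y‖ ^ 2 : ℝ) • (x⁻¹ * (u1 * star u2 - u2 * star u1) * x) +
              (‖x‖ ^ 2 : ℝ) • (y⁻¹ * (w1 * star w2 - w2 * star w1) * y) -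
              (2 : ℝ) • (star x * u1 * star w2 * y - star x * u2 * star w1 * y)).im := by
  constructor
  · rintro ⟨⟨x, y⟩, t⟩ ⟨⟨hx, hy⟩, -⟩
    apply ContDiffAt.contDiffWithinAt
    have hx' : ‖x‖ ≠ 0 := norm_ne_zero_iff.2 hx
    have hn0 : (‖x‖^2 + ‖y‖^2) ≠ 0 := by positivity
    set q0 : (ℍ[ℝ] × ℍ[ℝ]) × (ℍ[ℝ] × ℍ[ℝ]) := ((x, y), t) with hq0
    have h1 : ContDiffAt ℝ (⊤:ℕ∞) (fun q : (ℍ[ℝ] × ℍ[ℝ]) × (ℍ[ℝ] × ℍ[ℝ]) => q.1.1) q0 :=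
      (contDiff_fst.comp contDiff_fst).contDiffAt
    have h2 : ContDiffAt ℝ (⊤:ℕ∞) (fun q : (ℍ[ℝ] × ℍ[ℝ]) × (ℍ[ℝ] × ℍ[ℝ]) => q.1.2) q0 :=
      (contDiff_snd.comp contDiff_fst).contDiffAt
    have h3 : ContDiffAt ℝ (⊤:ℕ∞) (fun q : (ℍ[ℝ] × ℍ[ℝ]) × (ℍ[ℝ] × ℍ[ℝ]) => q.2.1) q0 :=
      (contDiff_fst.comp contDiff_snd).contDiffAt
    have h4 : ContDiffAt ℝ (⊤:ℕ∞) (fun q : (ℍ[ℝ] × ℍ[ℝ]) × (ℍ[ℝ] × ℍ[ℝ]) => q.2.2) q0 :=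
      (contDiff_snd.comp contDiff_snd).contDiffAt
    have hinvx : ContDiffAt ℝ (⊤:ℕ∞) (fun a : ℍ[ℝ] => a⁻¹) x := by
      have := contDiffAt_ringInverse ℝ (n := (⊤:ℕ∞)) (Units.mk0 x hx)
      simpa [Ring.inverse_eq_inv'] using this
    have hinvy : ContDiffAt ℝ (⊤:ℕ∞) (fun a : ℍ[ℝ] => a⁻¹) y := by
      have := contDiffAt_ringInverse ℝ (n := (⊤:ℕ∞)) (Units.mk0 y hy)
      simpa [Ring.inverse_eq_inv'] using this
    have hi1 : ContDiffAt ℝ (⊤:ℕ∞) (fun q : (ℍ[ℝ] × ℍ[ℝ]) × (ℍ[ℝ] × ℍ[ℝ]) => q.1.1⁻¹) q0 :=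
      hinvx.comp q0 h1
    have hi2 : ContDiffAt ℝ (⊤:ℕ∞) (fun q : (ℍ[ℝ] × ℍ[ℝ]) × (ℍ[ℝ] × ℍ[ℝ]) => q.1.2⁻¹) q0 :=
      hinvy.comp q0 h2
    have hnx : ContDiffAt ℝ (⊤:ℕ∞) (fun q : (ℍ[ℝ] × ℍ[ℝ]) × (ℍ[ℝ] × ℍ[ℝ]) => ‖q.1.1‖^2) q0 :=
      ((contDiff_norm_sq ℝ).contDiffAt).comp q0 h1
    have hny : ContDiffAt ℝ (⊤:ℕ∞) (fun q : (ℍ[ℝ] × ℍ[ℝ]) × (ℍ[ℝ] × ℍ[ℝ]) => ‖q.1.2‖^2) q0 :=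
      ((contDiff_norm_sq ℝ).contDiffAt).comp q0 h2
    have hninv : ContDiffAt ℝ (⊤:ℕ∞)
        (fun q : (ℍ[ℝ] × ℍ[ℝ]) × (ℍ[ℝ] × ℍ[ℝ]) => (‖q.1.1‖^2 + ‖q.1.2‖^2)⁻¹) q0 :=
      (hnx.add hny).inv hn0
    have hbig : ContDiffAt ℝ (⊤:ℕ∞)
        (fun q : (ℍ[ℝ] × ℍ[ℝ]) × (ℍ[ℝ] × ℍ[ℝ]) =>
          ((‖q.1.2‖^2 : ℝ) • (q.1.1⁻¹ * q.2.1) + (‖q.1.1‖^2 : ℝ) • (q.1.2⁻¹ * q.2.2))) q0 :=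
      (hny.smul (hi1.mul h3)).add (hnx.smul (hi2.mul h4))
    have him := (imCLM.contDiff.contDiffAt).comp q0 hbig
    have := hninv.smul him
    exact this.congr_of_eventuallyEq
      (by filter_upwards with q; simp [A0, Function.comp])
  · intro x y hx hy u1 w1 u2 w2
    have hx0 : (normSq x : ℝ) ≠ 0 := normSq_ne_zero.2 hx
    have hy0 : (normSq y : ℝ) ≠ 0 := normSq_ne_zero.2 hy
    have hn0 : (normSq x + normSq y : ℝ) ≠ 0 := by
      have h1 : (0:ℝ) ≤ normSq x := normSq_nonneg
      have h2 : (0:ℝ) ≤ normSq y := normSq_nonneg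
      rcases h1.lt_or_eq with h | h
      · nlinarith
      · exact absurd (normSq_eq_zero.1 h.symm) hx
    rw [fderiv_A0 x y hx hy u2 w2 u1 w1, fderiv_A0 x y hx hy u1 w1 u2 w2]
    simp only [A0]
    have hq : ∀ q : ℍ[ℝ], (‖q‖:ℝ)^2 = normSq q := fun q => by
      rw [sq, ← normSq_eq_norm_mul_self]
    simp only [hq]
    rw [J4]
    simp only [Quaternion.inv_def]
    simp only [smul_mul_assoc, mul_smul_comm, smul_smul, mul_assoc, neg_mul, mul_neg, smul_neg,
      neg_smul, smul_add, smul_sub, add_mul, mul_add, sub_mul, mul_sub,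
      Quaternion.im_smul, Quaternion.im_add, Quaternion.im_sub, Quaternion.im_neg]
    rw [R3 x y u1 w2, R3 x y u2 w1]
    simp only [R1, R2]
    simp only [Quaternion.im_smul, Quaternion.im_add, Quaternion.im_sub, Quaternion.im_neg,
      smul_add, smul_sub, smul_neg, smul_smul]
    rw [R5 x y u1 w2, R5 x y u2 w1]
    match_scalars <;> field_simp <;> ring
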